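/- det ψ = J, where ψ is the rank-one perturbation ψ_{jk} := H_{jk} + (1 − r)·v_j·conj(v_k). In particular, if J ≠ 0 then ψ is invertible. -/
import Mathlib

open ComplexConjugate Matrix Polynomial

lemma det_rank_one_isUnit {K : Type*} [Field K] {m : Type*} [Fintype m] [DecidableEq m]
    (A : Matrix m m K) (hA : IsUnit A.det) (u w : m → K) :
    (A + Matrix.of (fun i j => u i * w j)).det
      = A.det + ∑ j, ∑ k, w j * A.adjugate j k * u k := by
  have hc : Matrix.of (fun i j => u i * w j) = Matrix.replicateCol (Fin 1) u * Matrix.replicateRow (Fin 1) w := by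
    ext i j; simp [Matrix.mul_apply]
  rw [hc, Matrix.det_add_mul _ _ hA, Matrix.det_fin_one]
  simp only [Matrix.add_apply, Matrix.one_apply_eq, Matrix.mul_apply, Matrix.replicateRow_apply,
    Matrix.replicateCol_apply, Finset.sum_mul]
  rw [mul_add, mul_one]
  congr 1
  rw [Finset.sum_comm, Finset.mul_sum]
  refine Finset.sum_congr rfl fun j _ => ?_
  rw [Finset.mul_sum]
  refine Finset.sum_congr rfl fun k _ => ?_
  have hinv : A.det * A⁻¹ j k = A.adjugate j k := by
    rw [Matrix.inv_def, Matrix.smul_apply, smul_eq_mul, ← mul_assoc,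
      Ring.mul_inverse_cancel _ hA, one_mul]
  calc A.det * (w j * A⁻¹ j k * u k) = w j * (A.det * A⁻¹ j k) * u k := by ring
    _ = w j * A.adjugate j k * u k := by rw [hinv]

lemma map_lhs {R S : Type*} [CommRing R] [CommRing S] (f : R →+* S)
    {m : Type*} [Fintype m] [DecidableEq m] (A : Matrix m m R) (u w : m → R) :
    f ((A + Matrix.of (fun i j => u i * w j)).det)
      = (f.mapMatrix A + Matrix.of (fun i j => f (u i) * f (w j))).det := by
  rw [RingHom.map_det]
  congr 1
  ext i j
  simp [RingHom.mapMatrix_apply]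

lemma map_rhs {R S : Type*} [CommRing R] [CommRing S] (f : R →+* S)
    {m : Type*} [Fintype m] [DecidableEq m] (A : Matrix m m R) (u w : m → R) :
    f (A.det + ∑ j, ∑ k, w j * A.adjugate j k * u k)
      = (f.mapMatrix A).det
        + ∑ j, ∑ k, f (w j) * (f.mapMatrix A).adjugate j k * f (u k) := by
  have hadj : ∀ j k, f (A.adjugate j k) = (A.map ⇑f).adjugate j k := by
    intro j k
    have h := RingHom.map_adjugate f A
    rw [RingHom.mapMatrix_apply, RingHom.mapMatrix_apply] at h
    rw [← h, Matrix.map_apply]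
  simp only [map_add, RingHom.map_det, map_sum, _root_.map_mul,
    RingHom.mapMatrix_apply, hadj]

/-- The matrix determinant lemma over ℂ, without invertibility assumptions. -/
lemma det_rank_one {m : Type*} [Fintype m] [DecidableEq m]
    (A : Matrix m m ℂ) (u w : m → ℂ) :
    (A + Matrix.of (fun i j => u i * w j)).det
      = A.det + ∑ j, ∑ k, w j * A.adjugate j k * u k := by
  classical
  set B : Matrix m m ℂ[X] := Matrix.charmatrix (-A) with hBdef
  have hBdet : B.det ≠ 0 := (Matrix.charpoly_monic (-A)).ne_zero
  set φ : ℂ[X] →+* RatFunc ℂ := (algebraMap ℂ[X] (RatFunc ℂ) : ℂ[X] →+* RatFunc ℂ) with hφdef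
  have hφ : Function.Injective φ := RatFunc.algebraMap_injective ℂ
  have hunit : IsUnit (φ.mapMatrix B).det := by
    rw [← RingHom.map_det]
    exact isUnit_iff_ne_zero.mpr (fun hc => hBdet (hφ (by simpa using hc)))
  have hpoly : (B + Matrix.of (fun i j => C (u i) * C (w j))).det
      = B.det + ∑ j, ∑ k, C (w j) * B.adjugate j k * C (u k) := by
    apply hφ
    rw [map_lhs, map_rhs]
    exact det_rank_one_isUnit _ hunit _ _
  set ev : ℂ[X] →+* ℂ := Polynomial.evalRingHom 0 with hevdef
  have hevB : ev.mapMatrix B = A := by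
    ext i j
    by_cases hij : i = j
    · subst hij
      simp [RingHom.mapMatrix_apply, hBdef, Matrix.charmatrix_apply_eq, hevdef,
        Polynomial.coe_evalRingHom]
    · simp [RingHom.mapMatrix_apply, hBdef, Matrix.charmatrix_apply_ne _ _ _ hij, hevdef,
        Polynomial.coe_evalRingHom]
  have key := congrArg ev hpoly
  rw [map_lhs, map_rhs, hevB] at key
  simpa [hevdef, Polynomial.coe_evalRingHom] using key

/-- For the rank-one perturbation `ψ_{jk} = H_{jk} + (1−r)·v_j·conj(v_k)`,
`det ψ = J`; in particular if `J ≠ 0` then `ψ` is invertible. -/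
theorem stmt_4 (n : ℕ) (hn : 1 ≤ n)
    (H : Matrix (Fin (n + 1)) (Fin (n + 1)) ℂ) (v ξ : Fin (n + 1) → ℂ) (r : ℝ)
    (hξH : ∀ k, ∑ j, ξ j * H j k = (r : ℂ) * conj (v k))
    (hvξ : ∑ j, v j * ξ j = 1)
    (J : ℂ) (hJ : J = ∑ j, ∑ k, conj (v j) * H.adjugate j k * v k)
    (ψ : Matrix (Fin (n + 1)) (Fin (n + 1)) ℂ)
    (hψ : ∀ j k, ψ j k = H j k + ((1 : ℂ) - (r : ℂ)) * v j * conj (v k)) :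
    ψ.det = J ∧ (J ≠ 0 → IsUnit ψ) := by
  -- det H = r * J
  have hrow : ∀ l, ∑ k, ((r : ℂ) * conj (v k)) * H.adjugate k l = H.det * ξ l := by
    intro l
    calc ∑ k, ((r : ℂ) * conj (v k)) * H.adjugate k l
        = ∑ k, (∑ j, ξ j * H j k) * H.adjugate k l := by
          refine Finset.sum_congr rfl fun k _ => ?_
          rw [hξH k]
      _ = ∑ k, ∑ j, ξ j * (H j k * H.adjugate k l) := by
          refine Finset.sum_congr rfl fun k _ => ?_
          rw [Finset.sum_mul]
          exact Finset.sum_congr rfl fun j _ => by ring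
      _ = ∑ j, ξ j * (∑ k, H j k * H.adjugate k l) := by
          rw [Finset.sum_comm]
          exact Finset.sum_congr rfl fun j _ => by rw [Finset.mul_sum]
      _ = ∑ j, ξ j * ((H * H.adjugate) j l) := by
          refine Finset.sum_congr rfl fun j _ => ?_
          rw [Matrix.mul_apply]
      _ = ∑ j, ξ j * ((H.det • (1 : Matrix (Fin (n+1)) (Fin (n+1)) ℂ)) j l) := by
          rw [Matrix.mul_adjugate]
      _ = H.det * ξ l := by
          rw [Finset.sum_eq_single l]
          · simp [mul_comm]
          · intro j _ hj
            simp [Matrix.one_apply_ne hj]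
          · intro h; exact absurd (Finset.mem_univ l) h
  have hdetH : H.det = (r : ℂ) * J := by
    have h1 : ∑ l, (∑ k, ((r : ℂ) * conj (v k)) * H.adjugate k l) * v l
        = ∑ l, (H.det * ξ l) * v l := by
      refine Finset.sum_congr rfl fun l _ => ?_
      rw [hrow l]
    have h2 : ∑ l, (H.det * ξ l) * v l = H.det := by
      rw [show ∑ l, (H.det * ξ l) * v l = H.det * ∑ l, v l * ξ l by
        rw [Finset.mul_sum]; exact Finset.sum_congr rfl fun l _ => by ring]
      rw [hvξ, mul_one]
    have h3 : ∑ l, (∑ k, ((r : ℂ) * conj (v k)) * H.adjugate k l) * v l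
        = (r : ℂ) * J := by
      rw [hJ]
      simp only [Finset.sum_mul, Finset.mul_sum]
      rw [Finset.sum_comm]
      exact Finset.sum_congr rfl fun k _ => Finset.sum_congr rfl fun l _ => by ring
    rw [← h2, ← h1, h3]
  -- det ψ = det H + (1-r) * J
  have hψeq : ψ = H + Matrix.of (fun j k => (((1 : ℂ) - (r : ℂ)) * v j) * conj (v k)) := by
    ext j k
    rw [hψ j k]
    simp only [Matrix.add_apply, Matrix.of_apply, mul_assoc]
  have hdet : ψ.det = J := by
    rw [hψeq, det_rank_one H (fun j => ((1 : ℂ) - (r : ℂ)) * v j) (fun k => conj (v k))]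
    have hsum : ∑ j, ∑ k, conj (v j) * H.adjugate j k * (((1 : ℂ) - (r : ℂ)) * v k)
        = ((1 : ℂ) - (r : ℂ)) * J := by
      rw [hJ, Finset.mul_sum]
      refine Finset.sum_congr rfl fun j _ => ?_
      rw [Finset.mul_sum]
      refine Finset.sum_congr rfl fun k _ => ?_
      ring
    rw [hsum, hdetH]
    ring
  refine ⟨hdet, fun hJ0 => ?_⟩
  rw [Matrix.isUnit_iff_isUnit_det, hdet]
  exact isUnit_iff_ne_zero.mpr hJ0
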